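/- For arbitrary real 3×3 matrices f₊₊, f₊₋, f₋₊, f₋₋, the Euler-density contraction of the tensor R_{abcd} satisfies Σ_{a,b,c,d,e,f,g,h=1}^{4} ε_{abcd} ε_{efgh} R_{abef} R_{cdgh} = 64 ( ‖f₊₊‖² + ‖f₋₋‖² − ‖f₊₋‖² − ‖f₋₊‖² ), where ε is the four-index Levi-Civita symbol with ε_{1234} = 1 and ‖f‖² = Σ_{i,j} (f^{ij})² denotes the squared Frobenius norm. -/

import Mathlib

noncomputable section

open Matrix

/-- Three-index Levi-Civita symbol on `Fin 3` (ε₁₂₃ = 1, zero-indexed as ε₀₁₂ = 1). -/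
def eps3 (i j k : Fin 3) : ℝ :=
  ((j : ℝ) - (i : ℝ)) * ((k : ℝ) - (i : ℝ)) * ((k : ℝ) - (j : ℝ)) / 2

/-- Four-index Levi-Civita symbol on `Fin 4` (ε₁₂₃₄ = 1, zero-indexed as ε₀₁₂₃ = 1). -/
def eps4 (a b c d : Fin 4) : ℝ :=
  ((b : ℝ) - (a : ℝ)) * ((c : ℝ) - (a : ℝ)) * ((d : ℝ) - (a : ℝ)) *
    ((c : ℝ) - (b : ℝ)) * ((d : ℝ) - (b : ℝ)) * ((d : ℝ) - (c : ℝ)) / 12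

/-- 't Hooft symbol η^i_{ab}: η^i_{jk} = ε_{ijk}, η^i_{j4} = δ_{ij}, η^i_{4j} = -δ_{ij},
η^i_{44} = 0 (the index `4` of the paper is the index `3 : Fin 4` here). -/
def tHooft (i : Fin 3) (a b : Fin 4) : ℝ :=
  if ha : (a : ℕ) < 3 then
    if hb : (b : ℕ) < 3 then eps3 i ⟨a, ha⟩ ⟨b, hb⟩
    else if (a : ℕ) = (i : ℕ) then 1 else 0
  else
    if (b : ℕ) < 3 then (if (b : ℕ) = (i : ℕ) then -1 else 0)
    else 0

/-- 't Hooft symbol η̄^i_{ab}: η̄^i_{jk} = ε_{ijk}, η̄^i_{j4} = -δ_{ij}, η̄^i_{4j} = δ_{ij},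
η̄^i_{44} = 0. -/
def tHooftBar (i : Fin 3) (a b : Fin 4) : ℝ :=
  if ha : (a : ℕ) < 3 then
    if hb : (b : ℕ) < 3 then eps3 i ⟨a, ha⟩ ⟨b, hb⟩
    else if (a : ℕ) = (i : ℕ) then -1 else 0
  else
    if (b : ℕ) < 3 then (if (b : ℕ) = (i : ℕ) then 1 else 0)
    else 0

/-- The curvature-type tensor built from 3×3 matrices f₊₊, f₊₋, f₋₊, f₋₋ via the
't Hooft symbols. -/
def Riem (fpp fpm fmp fmm : Matrix (Fin 3) (Fin 3) ℝ) (a b c d : Fin 4) : ℝ :=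
  ∑ i : Fin 3, ∑ j : Fin 3,
    (fpp i j * tHooft i a b * tHooft j c d
      + fpm i j * tHooft i a b * tHooftBar j c d
      + fmp i j * tHooftBar i a b * tHooft j c d
      + fmm i j * tHooftBar i a b * tHooftBar j c d)

@[simp] lemma v30 : ((0 : Fin 3) : ℕ) = 0 := rfl
@[simp] lemma v31 : ((1 : Fin 3) : ℕ) = 1 := rfl
@[simp] lemma v32 : ((2 : Fin 3) : ℕ) = 2 := rfl
@[simp] lemma v40 : ((0 : Fin 4) : ℕ) = 0 := rfl
@[simp] lemma v41 : ((1 : Fin 4) : ℕ) = 1 := rfl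
@[simp] lemma v42 : ((2 : Fin 4) : ℕ) = 2 := rfl
@[simp] lemma v43 : ((3 : Fin 4) : ℕ) = 3 := rfl
example : tHooft 0 1 2 = 1 := by norm_num [tHooft, eps3]
example : tHooft 0 0 3 = 1 := by norm_num [tHooft, eps3]
example : tHooft 2 3 1 = 0 := by norm_num [tHooft, eps3]
example : eps4 0 1 2 3 = 1 := by norm_num [eps4]
example : eps4 2 1 2 3 = 0 := by norm_num [eps4]

set_option maxHeartbeats 1000000 in
lemma DH (j : Fin 3) (e f : Fin 4) :
    ∑ g : Fin 4, ∑ h : Fin 4, eps4 e f g h * tHooft j g h = 2 * tHooft j e f := by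
  fin_cases j <;> fin_cases e <;> fin_cases f <;>
    norm_num [Fin.sum_univ_four, eps4, tHooft, eps3] <;> decide
set_option maxHeartbeats 1000000 in
lemma DB (j : Fin 3) (e f : Fin 4) :
    ∑ g : Fin 4, ∑ h : Fin 4, eps4 e f g h * tHooftBar j g h = -2 * tHooftBar j e f := by
  fin_cases j <;> fin_cases e <;> fin_cases f <;>
    norm_num [Fin.sum_univ_four, eps4, tHooftBar, eps3] <;> decide
set_option maxHeartbeats 1000000 in
lemma OHB (i j : Fin 3) :
    ∑ a : Fin 4, ∑ b : Fin 4, tHooft i a b * tHooftBar j a b = 0 := by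
  fin_cases i <;> fin_cases j <;>
    norm_num [Fin.sum_univ_four, tHooft, tHooftBar, eps3] <;> simp +decide
set_option maxHeartbeats 1000000 in
lemma OHH (i j : Fin 3) :
    ∑ a : Fin 4, ∑ b : Fin 4, tHooft i a b * tHooft j a b = if i = j then 4 else 0 := by
  fin_cases i <;> fin_cases j <;>
    norm_num [Fin.sum_univ_four, tHooft, eps3] <;> simp +decide <;> norm_num
set_option maxHeartbeats 1000000 in
lemma OBB (i j : Fin 3) :
    ∑ a : Fin 4, ∑ b : Fin 4, tHooftBar i a b * tHooftBar j a b = if i = j then 4 else 0 := by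
  fin_cases i <;> fin_cases j <;>
    norm_num [Fin.sum_univ_four, tHooftBar, eps3] <;> simp +decide <;> norm_num
set_option maxHeartbeats 1000000 in
lemma OBH (i j : Fin 3) :
    ∑ a : Fin 4, ∑ b : Fin 4, tHooftBar i a b * tHooft j a b = 0 := by
  fin_cases i <;> fin_cases j <;>
    norm_num [Fin.sum_univ_four, tHooft, tHooftBar, eps3] <;> simp +decide

-- ==== symbolic lemmas ====
lemma C1 (M1 M2 M3 M4 : Matrix (Fin 3) (Fin 3) ℝ) (c d e f : Fin 4) :
    ∑ g : Fin 4, ∑ h : Fin 4, eps4 e f g h * Riem M1 M2 M3 M4 c d g h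
      = 2 * Riem M1 (-M2) M3 (-M4) c d e f := by
  have key : ∀ i j : Fin 3,
      (∑ g : Fin 4, ∑ h : Fin 4, eps4 e f g h *
        (M1 i j * tHooft i c d * tHooft j g h
          + M2 i j * tHooft i c d * tHooftBar j g h
          + M3 i j * tHooftBar i c d * tHooft j g h
          + M4 i j * tHooftBar i c d * tHooftBar j g h))
      = M1 i j * tHooft i c d * (2 * tHooft j e f)
        + M2 i j * tHooft i c d * (-2 * tHooftBar j e f)
        + M3 i j * tHooftBar i c d * (2 * tHooft j e f)
        + M4 i j * tHooftBar i c d * (-2 * tHooftBar j e f) := by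
    intro i j
    have expand : ∀ g h : Fin 4, eps4 e f g h *
        (M1 i j * tHooft i c d * tHooft j g h
          + M2 i j * tHooft i c d * tHooftBar j g h
          + M3 i j * tHooftBar i c d * tHooft j g h
          + M4 i j * tHooftBar i c d * tHooftBar j g h)
        = (M1 i j * tHooft i c d) * (eps4 e f g h * tHooft j g h)
          + (M2 i j * tHooft i c d) * (eps4 e f g h * tHooftBar j g h)
          + (M3 i j * tHooftBar i c d) * (eps4 e f g h * tHooft j g h)
          + (M4 i j * tHooftBar i c d) * (eps4 e f g h * tHooftBar j g h) := by
      intro g h; ring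
    simp only [expand, Finset.sum_add_distrib, ← Finset.mul_sum, DH, DB]
  calc ∑ g : Fin 4, ∑ h : Fin 4, eps4 e f g h * Riem M1 M2 M3 M4 c d g h
      = ∑ i : Fin 3, ∑ j : Fin 3, ∑ g : Fin 4, ∑ h : Fin 4, eps4 e f g h *
          (M1 i j * tHooft i c d * tHooft j g h
            + M2 i j * tHooft i c d * tHooftBar j g h
            + M3 i j * tHooftBar i c d * tHooft j g h
            + M4 i j * tHooftBar i c d * tHooftBar j g h) := by
        simp only [Riem, Finset.mul_sum]
        conv_lhs => enter [2, g]; rw [Finset.sum_comm]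
        rw [Finset.sum_comm]
        conv_lhs => enter [2, i, 2, g]; rw [Finset.sum_comm]
        conv_lhs => enter [2, i]; rw [Finset.sum_comm]
    _ = 2 * Riem M1 (-M2) M3 (-M4) c d e f := by
        simp only [key, Riem, Matrix.neg_apply, Finset.mul_sum]
        exact Finset.sum_congr rfl fun i _ => Finset.sum_congr rfl fun j _ => by ring

lemma CH (B1 B2 B3 B4 : Matrix (Fin 3) (Fin 3) ℝ) (j : Fin 3) (c d : Fin 4) :
    ∑ e : Fin 4, ∑ f : Fin 4, tHooft j e f * Riem B1 B2 B3 B4 c d e f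
      = ∑ k : Fin 3, (4 * B1 k j * tHooft k c d + 4 * B3 k j * tHooftBar k c d) := by
  have key : ∀ k l : Fin 3,
      (∑ e : Fin 4, ∑ f : Fin 4, tHooft j e f *
        (B1 k l * tHooft k c d * tHooft l e f
          + B2 k l * tHooft k c d * tHooftBar l e f
          + B3 k l * tHooftBar k c d * tHooft l e f
          + B4 k l * tHooftBar k c d * tHooftBar l e f))
      = (B1 k l * tHooft k c d) * (if j = l then 4 else 0)
        + (B3 k l * tHooftBar k c d) * (if j = l then 4 else 0) := by
    intro k l
    have expand : ∀ e f : Fin 4, tHooft j e f *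
        (B1 k l * tHooft k c d * tHooft l e f
          + B2 k l * tHooft k c d * tHooftBar l e f
          + B3 k l * tHooftBar k c d * tHooft l e f
          + B4 k l * tHooftBar k c d * tHooftBar l e f)
        = (B1 k l * tHooft k c d) * (tHooft j e f * tHooft l e f)
          + (B2 k l * tHooft k c d) * (tHooft j e f * tHooftBar l e f)
          + (B3 k l * tHooftBar k c d) * (tHooft j e f * tHooft l e f)
          + (B4 k l * tHooftBar k c d) * (tHooft j e f * tHooftBar l e f) := by
      intro e f; ring
    simp only [expand, Finset.sum_add_distrib, ← Finset.mul_sum, OHH, OHB]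
    ring
  calc ∑ e : Fin 4, ∑ f : Fin 4, tHooft j e f * Riem B1 B2 B3 B4 c d e f
      = ∑ k : Fin 3, ∑ l : Fin 3, ∑ e : Fin 4, ∑ f : Fin 4, tHooft j e f *
          (B1 k l * tHooft k c d * tHooft l e f
            + B2 k l * tHooft k c d * tHooftBar l e f
            + B3 k l * tHooftBar k c d * tHooft l e f
            + B4 k l * tHooftBar k c d * tHooftBar l e f) := by
        simp only [Riem, Finset.mul_sum]
        conv_lhs => enter [2, g]; rw [Finset.sum_comm]
        rw [Finset.sum_comm]
        conv_lhs => enter [2, i, 2, g]; rw [Finset.sum_comm]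
        conv_lhs => enter [2, i]; rw [Finset.sum_comm]
    _ = ∑ k : Fin 3, (4 * B1 k j * tHooft k c d + 4 * B3 k j * tHooftBar k c d) := by
        simp only [key]
        apply Finset.sum_congr rfl
        intro k _
        simp [mul_ite, Finset.sum_add_distrib, Finset.sum_ite_eq]
        ring

lemma CB (B1 B2 B3 B4 : Matrix (Fin 3) (Fin 3) ℝ) (j : Fin 3) (c d : Fin 4) :
    ∑ e : Fin 4, ∑ f : Fin 4, tHooftBar j e f * Riem B1 B2 B3 B4 c d e f
      = ∑ k : Fin 3, (4 * B2 k j * tHooft k c d + 4 * B4 k j * tHooftBar k c d) := by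
  have key : ∀ k l : Fin 3,
      (∑ e : Fin 4, ∑ f : Fin 4, tHooftBar j e f *
        (B1 k l * tHooft k c d * tHooft l e f
          + B2 k l * tHooft k c d * tHooftBar l e f
          + B3 k l * tHooftBar k c d * tHooft l e f
          + B4 k l * tHooftBar k c d * tHooftBar l e f))
      = (B2 k l * tHooft k c d) * (if j = l then 4 else 0)
        + (B4 k l * tHooftBar k c d) * (if j = l then 4 else 0) := by
    intro k l
    have expand : ∀ e f : Fin 4, tHooftBar j e f *
        (B1 k l * tHooft k c d * tHooft l e f
          + B2 k l * tHooft k c d * tHooftBar l e f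
          + B3 k l * tHooftBar k c d * tHooft l e f
          + B4 k l * tHooftBar k c d * tHooftBar l e f)
        = (B1 k l * tHooft k c d) * (tHooftBar j e f * tHooft l e f)
          + (B2 k l * tHooft k c d) * (tHooftBar j e f * tHooftBar l e f)
          + (B3 k l * tHooftBar k c d) * (tHooftBar j e f * tHooft l e f)
          + (B4 k l * tHooftBar k c d) * (tHooftBar j e f * tHooftBar l e f) := by
      intro e f; ring
    simp only [expand, Finset.sum_add_distrib, ← Finset.mul_sum, OBB, OBH]
    ring
  calc ∑ e : Fin 4, ∑ f : Fin 4, tHooftBar j e f * Riem B1 B2 B3 B4 c d e f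
      = ∑ k : Fin 3, ∑ l : Fin 3, ∑ e : Fin 4, ∑ f : Fin 4, tHooftBar j e f *
          (B1 k l * tHooft k c d * tHooft l e f
            + B2 k l * tHooft k c d * tHooftBar l e f
            + B3 k l * tHooftBar k c d * tHooft l e f
            + B4 k l * tHooftBar k c d * tHooftBar l e f) := by
        simp only [Riem, Finset.mul_sum]
        conv_lhs => enter [2, g]; rw [Finset.sum_comm]
        rw [Finset.sum_comm]
        conv_lhs => enter [2, i, 2, g]; rw [Finset.sum_comm]
        conv_lhs => enter [2, i]; rw [Finset.sum_comm]
    _ = ∑ k : Fin 3, (4 * B2 k j * tHooft k c d + 4 * B4 k j * tHooftBar k c d) := by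
        simp only [key]
        apply Finset.sum_congr rfl
        intro k _
        simp [mul_ite, Finset.sum_add_distrib, Finset.sum_ite_eq]
        ring

lemma C2 (A1 A2 A3 A4 B1 B2 B3 B4 : Matrix (Fin 3) (Fin 3) ℝ) (a b c d : Fin 4) :
    ∑ e : Fin 4, ∑ f : Fin 4, Riem A1 A2 A3 A4 a b e f * Riem B1 B2 B3 B4 c d e f
      = 4 * Riem (fun i k => ∑ j : Fin 3, (A1 i j * B1 k j + A2 i j * B2 k j))
                 (fun i k => ∑ j : Fin 3, (A1 i j * B3 k j + A2 i j * B4 k j))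
                 (fun i k => ∑ j : Fin 3, (A3 i j * B1 k j + A4 i j * B2 k j))
                 (fun i k => ∑ j : Fin 3, (A3 i j * B3 k j + A4 i j * B4 k j)) a b c d := by
  have hA : ∀ e f : Fin 4, Riem A1 A2 A3 A4 a b e f
      = ∑ i : Fin 3, ∑ j : Fin 3,
          (A1 i j * tHooft i a b * tHooft j e f
            + A2 i j * tHooft i a b * tHooftBar j e f
            + A3 i j * tHooftBar i a b * tHooft j e f
            + A4 i j * tHooftBar i a b * tHooftBar j e f) := fun _ _ => rfl
  have key : ∀ i j : Fin 3,
      (∑ e : Fin 4, ∑ f : Fin 4,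
        (A1 i j * tHooft i a b * tHooft j e f
          + A2 i j * tHooft i a b * tHooftBar j e f
          + A3 i j * tHooftBar i a b * tHooft j e f
          + A4 i j * tHooftBar i a b * tHooftBar j e f) * Riem B1 B2 B3 B4 c d e f)
      = (A1 i j * tHooft i a b) *
            (∑ k : Fin 3, (4 * B1 k j * tHooft k c d + 4 * B3 k j * tHooftBar k c d))
        + (A2 i j * tHooft i a b) *
            (∑ k : Fin 3, (4 * B2 k j * tHooft k c d + 4 * B4 k j * tHooftBar k c d))
        + (A3 i j * tHooftBar i a b) *
            (∑ k : Fin 3, (4 * B1 k j * tHooft k c d + 4 * B3 k j * tHooftBar k c d))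
        + (A4 i j * tHooftBar i a b) *
            (∑ k : Fin 3, (4 * B2 k j * tHooft k c d + 4 * B4 k j * tHooftBar k c d)) := by
    intro i j
    have expand : ∀ e f : Fin 4,
        (A1 i j * tHooft i a b * tHooft j e f
          + A2 i j * tHooft i a b * tHooftBar j e f
          + A3 i j * tHooftBar i a b * tHooft j e f
          + A4 i j * tHooftBar i a b * tHooftBar j e f) * Riem B1 B2 B3 B4 c d e f
        = (A1 i j * tHooft i a b) * (tHooft j e f * Riem B1 B2 B3 B4 c d e f)
          + (A2 i j * tHooft i a b) * (tHooftBar j e f * Riem B1 B2 B3 B4 c d e f)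
          + (A3 i j * tHooftBar i a b) * (tHooft j e f * Riem B1 B2 B3 B4 c d e f)
          + (A4 i j * tHooftBar i a b) * (tHooftBar j e f * Riem B1 B2 B3 B4 c d e f) := by
      intro e f; ring
    simp only [expand, Finset.sum_add_distrib, ← Finset.mul_sum, CH, CB]
  calc ∑ e : Fin 4, ∑ f : Fin 4, Riem A1 A2 A3 A4 a b e f * Riem B1 B2 B3 B4 c d e f
      = ∑ i : Fin 3, ∑ j : Fin 3, ∑ e : Fin 4, ∑ f : Fin 4,
          (A1 i j * tHooft i a b * tHooft j e f
            + A2 i j * tHooft i a b * tHooftBar j e f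
            + A3 i j * tHooftBar i a b * tHooft j e f
            + A4 i j * tHooftBar i a b * tHooftBar j e f) * Riem B1 B2 B3 B4 c d e f := by
        simp only [hA, Finset.sum_mul]
        conv_lhs => enter [2, g]; rw [Finset.sum_comm]
        rw [Finset.sum_comm]
        conv_lhs => enter [2, i, 2, g]; rw [Finset.sum_comm]
        conv_lhs => enter [2, i]; rw [Finset.sum_comm]
    _ = ∑ i : Fin 3, ∑ k : Fin 3, ∑ j : Fin 3,
          ((A1 i j * tHooft i a b) * (4 * B1 k j * tHooft k c d + 4 * B3 k j * tHooftBar k c d)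
            + (A2 i j * tHooft i a b) * (4 * B2 k j * tHooft k c d + 4 * B4 k j * tHooftBar k c d)
            + (A3 i j * tHooftBar i a b) * (4 * B1 k j * tHooft k c d + 4 * B3 k j * tHooftBar k c d)
            + (A4 i j * tHooftBar i a b) * (4 * B2 k j * tHooft k c d + 4 * B4 k j * tHooftBar k c d)) := by
        simp only [key, Finset.mul_sum, ← Finset.sum_add_distrib]
        conv_lhs => enter [2, i]; rw [Finset.sum_comm]
    _ = 4 * Riem (fun i k => ∑ j : Fin 3, (A1 i j * B1 k j + A2 i j * B2 k j))
                 (fun i k => ∑ j : Fin 3, (A1 i j * B3 k j + A2 i j * B4 k j))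
                 (fun i k => ∑ j : Fin 3, (A3 i j * B1 k j + A4 i j * B2 k j))
                 (fun i k => ∑ j : Fin 3, (A3 i j * B3 k j + A4 i j * B4 k j)) a b c d := by
        simp only [Riem, Finset.mul_sum, Finset.sum_mul, ← Finset.sum_add_distrib]
        refine Finset.sum_congr rfl fun i _ => Finset.sum_congr rfl fun k _ =>
          Finset.sum_congr rfl fun j _ => by ring

lemma TR (Q1 Q2 Q3 Q4 : Matrix (Fin 3) (Fin 3) ℝ) :
    ∑ a : Fin 4, ∑ b : Fin 4, Riem Q1 Q2 Q3 Q4 a b a b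
      = 4 * ((∑ i : Fin 3, Q1 i i) + (∑ i : Fin 3, Q4 i i)) := by
  have key : ∀ i j : Fin 3,
      (∑ a : Fin 4, ∑ b : Fin 4,
        (Q1 i j * tHooft i a b * tHooft j a b
          + Q2 i j * tHooft i a b * tHooftBar j a b
          + Q3 i j * tHooftBar i a b * tHooft j a b
          + Q4 i j * tHooftBar i a b * tHooftBar j a b))
      = Q1 i j * (if i = j then (4:ℝ) else 0) + Q4 i j * (if i = j then (4:ℝ) else 0) := by
    intro i j
    have expand : ∀ a b : Fin 4,
        (Q1 i j * tHooft i a b * tHooft j a b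
          + Q2 i j * tHooft i a b * tHooftBar j a b
          + Q3 i j * tHooftBar i a b * tHooft j a b
          + Q4 i j * tHooftBar i a b * tHooftBar j a b)
        = Q1 i j * (tHooft i a b * tHooft j a b)
          + Q2 i j * (tHooft i a b * tHooftBar j a b)
          + Q3 i j * (tHooftBar i a b * tHooft j a b)
          + Q4 i j * (tHooftBar i a b * tHooftBar j a b) := by
      intro a b; ring
    simp only [expand, Finset.sum_add_distrib, ← Finset.mul_sum, OHH, OHB, OBH, OBB]
    ring
  calc ∑ a : Fin 4, ∑ b : Fin 4, Riem Q1 Q2 Q3 Q4 a b a b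
      = ∑ i : Fin 3, ∑ j : Fin 3, ∑ a : Fin 4, ∑ b : Fin 4,
          (Q1 i j * tHooft i a b * tHooft j a b
            + Q2 i j * tHooft i a b * tHooftBar j a b
            + Q3 i j * tHooftBar i a b * tHooft j a b
            + Q4 i j * tHooftBar i a b * tHooftBar j a b) := by
        simp only [Riem]
        conv_lhs => enter [2, g]; rw [Finset.sum_comm]
        rw [Finset.sum_comm]
        conv_lhs => enter [2, i, 2, g]; rw [Finset.sum_comm]
        conv_lhs => enter [2, i]; rw [Finset.sum_comm]
    _ = 4 * ((∑ i : Fin 3, Q1 i i) + (∑ i : Fin 3, Q4 i i)) := by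
        simp only [key]
        simp only [mul_ite, mul_zero, Finset.sum_add_distrib,
          Finset.sum_ite_eq, Finset.mem_univ, if_true]
        rw [← Finset.sum_mul, ← Finset.sum_mul]
        ring

/-- Euler-density contraction:
Σ ε_{abcd} ε_{efgh} R_{abef} R_{cdgh} = 64 (‖f₊₊‖² + ‖f₋₋‖² − ‖f₊₋‖² − ‖f₋₊‖²). -/
theorem euler_density_contraction (fpp fpm fmp fmm : Matrix (Fin 3) (Fin 3) ℝ) :
    ∑ a : Fin 4, ∑ b : Fin 4, ∑ c : Fin 4, ∑ d : Fin 4,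
      ∑ e : Fin 4, ∑ f : Fin 4, ∑ g : Fin 4, ∑ h : Fin 4,
        eps4 a b c d * eps4 e f g h * Riem fpp fpm fmp fmm a b e f
          * Riem fpp fpm fmp fmm c d g h
    = 64 * ((∑ i : Fin 3, ∑ j : Fin 3, (fpp i j) ^ 2)
        + (∑ i : Fin 3, ∑ j : Fin 3, (fmm i j) ^ 2)
        - (∑ i : Fin 3, ∑ j : Fin 3, (fpm i j) ^ 2)
        - (∑ i : Fin 3, ∑ j : Fin 3, (fmp i j) ^ 2)) := by
  have hgh : ∀ a b c d e f : Fin 4,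
      (∑ g : Fin 4, ∑ h : Fin 4,
        eps4 a b c d * eps4 e f g h * Riem fpp fpm fmp fmm a b e f
          * Riem fpp fpm fmp fmm c d g h)
      = (eps4 a b c d * Riem fpp fpm fmp fmm a b e f)
          * (2 * Riem fpp (-fpm) fmp (-fmm) c d e f) := by
    intro a b c d e f
    have expand : ∀ g h : Fin 4,
        eps4 a b c d * eps4 e f g h * Riem fpp fpm fmp fmm a b e f
          * Riem fpp fpm fmp fmm c d g h
        = (eps4 a b c d * Riem fpp fpm fmp fmm a b e f)
            * (eps4 e f g h * Riem fpp fpm fmp fmm c d g h) := by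
      intro g h; ring
    simp only [expand, ← Finset.mul_sum]
    rw [C1]
  have hef : ∀ a b c d : Fin 4,
      (∑ e : Fin 4, ∑ f : Fin 4,
        (eps4 a b c d * Riem fpp fpm fmp fmm a b e f)
          * (2 * Riem fpp (-fpm) fmp (-fmm) c d e f))
      = (eps4 a b c d * 2) *
          (4 * Riem (fun i k => ∑ j : Fin 3, (fpp i j * fpp k j + fpm i j * (-fpm) k j))
               (fun i k => ∑ j : Fin 3, (fpp i j * fmp k j + fpm i j * (-fmm) k j))
               (fun i k => ∑ j : Fin 3, (fmp i j * fpp k j + fmm i j * (-fpm) k j))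
               (fun i k => ∑ j : Fin 3, (fmp i j * fmp k j + fmm i j * (-fmm) k j)) a b c d) := by
    intro a b c d
    have expand : ∀ e f : Fin 4,
        (eps4 a b c d * Riem fpp fpm fmp fmm a b e f)
          * (2 * Riem fpp (-fpm) fmp (-fmm) c d e f)
        = (eps4 a b c d * 2) *
            (Riem fpp fpm fmp fmm a b e f * Riem fpp (-fpm) fmp (-fmm) c d e f) := by
      intro e f; ring
    simp only [expand, ← Finset.mul_sum]
    rw [C2]
  have hcd : ∀ a b : Fin 4,
      (∑ c : Fin 4, ∑ d : Fin 4, (eps4 a b c d * 2) *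
          (4 * Riem (fun i k => ∑ j : Fin 3, (fpp i j * fpp k j + fpm i j * (-fpm) k j))
               (fun i k => ∑ j : Fin 3, (fpp i j * fmp k j + fpm i j * (-fmm) k j))
               (fun i k => ∑ j : Fin 3, (fmp i j * fpp k j + fmm i j * (-fpm) k j))
               (fun i k => ∑ j : Fin 3, (fmp i j * fmp k j + fmm i j * (-fmm) k j)) a b c d))
      = 8 * (2 * Riem (fun i k => ∑ j : Fin 3, (fpp i j * fpp k j + fpm i j * (-fpm) k j))
               (-(fun i k => ∑ j : Fin 3, (fpp i j * fmp k j + fpm i j * (-fmm) k j)))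
               (fun i k => ∑ j : Fin 3, (fmp i j * fpp k j + fmm i j * (-fpm) k j))
               (-(fun i k => ∑ j : Fin 3, (fmp i j * fmp k j + fmm i j * (-fmm) k j))) a b a b) := by
    intro a b
    have expand : ∀ c d : Fin 4,
        (eps4 a b c d * 2) *
          (4 * Riem (fun i k => ∑ j : Fin 3, (fpp i j * fpp k j + fpm i j * (-fpm) k j))
               (fun i k => ∑ j : Fin 3, (fpp i j * fmp k j + fpm i j * (-fmm) k j))
               (fun i k => ∑ j : Fin 3, (fmp i j * fpp k j + fmm i j * (-fpm) k j))
               (fun i k => ∑ j : Fin 3, (fmp i j * fmp k j + fmm i j * (-fmm) k j)) a b c d)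
        = 8 * (eps4 a b c d *
            Riem (fun i k => ∑ j : Fin 3, (fpp i j * fpp k j + fpm i j * (-fpm) k j))
               (fun i k => ∑ j : Fin 3, (fpp i j * fmp k j + fpm i j * (-fmm) k j))
               (fun i k => ∑ j : Fin 3, (fmp i j * fpp k j + fmm i j * (-fpm) k j))
               (fun i k => ∑ j : Fin 3, (fmp i j * fmp k j + fmm i j * (-fmm) k j)) a b c d) := by
      intro c d; ring
    simp only [expand, ← Finset.mul_sum]
    erw [C1]
    rfl
  simp only [hgh]
  simp only [hef]
  simp only [hcd]
  have expand : ∀ a b : Fin 4, (8:ℝ) *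
      (2 * Riem (fun i k => ∑ j : Fin 3, (fpp i j * fpp k j + fpm i j * (-fpm) k j))
               (-(fun i k => ∑ j : Fin 3, (fpp i j * fmp k j + fpm i j * (-fmm) k j)))
               (fun i k => ∑ j : Fin 3, (fmp i j * fpp k j + fmm i j * (-fpm) k j))
               (-(fun i k => ∑ j : Fin 3, (fmp i j * fmp k j + fmm i j * (-fmm) k j))) a b a b)
      = 16 * Riem (fun i k => ∑ j : Fin 3, (fpp i j * fpp k j + fpm i j * (-fpm) k j))
               (-(fun i k => ∑ j : Fin 3, (fpp i j * fmp k j + fpm i j * (-fmm) k j)))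
               (fun i k => ∑ j : Fin 3, (fmp i j * fpp k j + fmm i j * (-fpm) k j))
               (-(fun i k => ∑ j : Fin 3, (fmp i j * fmp k j + fmm i j * (-fmm) k j))) a b a b := by
    intro a b; ring
  simp only [expand, ← Finset.mul_sum]
  erw [TR]
  simp only [Matrix.neg_apply, Pi.neg_apply]
  have e1 : ∀ (X Y : Matrix (Fin 3) (Fin 3) ℝ),
      (∑ i : Fin 3, ∑ j : Fin 3, (X i j * X i j + Y i j * -(Y i j)))
      = (∑ i : Fin 3, ∑ j : Fin 3, X i j ^ 2) - (∑ i : Fin 3, ∑ j : Fin 3, Y i j ^ 2) := by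
    intro X Y
    rw [← Finset.sum_sub_distrib]
    exact Finset.sum_congr rfl fun i _ => by
      rw [← Finset.sum_sub_distrib]
      exact Finset.sum_congr rfl fun j _ => by ring
  have e2 : (∑ i : Fin 3, -(∑ j : Fin 3, (fmp i j * fmp i j + fmm i j * -(fmm i j))))
      = -((∑ i : Fin 3, ∑ j : Fin 3, (fmp i j * fmp i j + fmm i j * -(fmm i j)))) := by
    rw [← Finset.sum_neg_distrib]
  rw [e2, e1, e1]
  ring
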